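/- Let u(ω) solve A(ω;u,v) = F(ω;v) for all v ∈ V, and define U_0 by A_0(U_0,v) = F(ω;v) and recursively U_n by A_0(U_n,v) = F(ω;v) − A_1(ω;U_{n-1},v) for all v ∈ V, where A_1 = A − A_0. If A_0 is coercive with constant λ_0 and ‖A_1(ω)‖_{L(V×V,ℝ)}/λ_0 ≤ ρ < 1, then ‖u(ω) − U_n(ω)‖_V ≤ ρ^{n+1}‖u(ω)‖_V for all n ≥ 0. -/
import Mathlib


/-- A bilinear form on a real normed space, phrased via linearity in each slot. -/
def IsBilin {V : Type*} [NormedAddCommGroup V] [NormedSpace ℝ V] (B : V → V → ℝ) : Prop :=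
  (∀ c : ℝ, ∀ u v w, B (c • u + v) w = c * B u w + B v w) ∧
  (∀ c : ℝ, ∀ u v w, B u (c • v + w) = c * B u v + B u w)

lemma IsBilin.sub_left {V : Type*} [NormedAddCommGroup V] [NormedSpace ℝ V]
    {B : V → V → ℝ} (hB : IsBilin B) (x y w : V) : B (x - y) w = B x w - B y w := by
  have h := hB.1 (-1) y x w
  rw [neg_one_smul] at h
  have : x - y = -y + x := by abel
  rw [this, h]; ring

/-- Convergence of the iterative algorithm: with A = A₀ + A₁(ω), A₀ coercive with
constant λ₀ and ‖A₁(ω)‖ ≤ ρ λ₀ with ρ < 1, the iterates satisfy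
‖u(ω) − Uₙ(ω)‖ ≤ ρ^{n+1} ‖u(ω)‖. -/
theorem stmt1 {V Ω : Type*} [NormedAddCommGroup V] [InnerProductSpace ℝ V]
    (A A1 : Ω → V → V → ℝ) (A0 : V → V → ℝ) (F : Ω → V → ℝ)
    (lam0 ρ : ℝ) (hρ0 : 0 < ρ) (hρ1 : ρ < 1) (hlam0 : 0 < lam0)
    (hbilin0 : IsBilin A0) (hbilin1 : ∀ ω, IsBilin (A1 ω))
    (hsplit : ∀ ω v w, A ω v w = A0 v w + A1 ω v w)
    (hcoer : ∀ v, lam0 * ‖v‖ ^ 2 ≤ A0 v v)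
    (hA1bdd : ∀ ω v w, |A1 ω v w| ≤ ρ * lam0 * ‖v‖ * ‖w‖)
    (ω : Ω) (u : V) (hu : ∀ v, A ω u v = F ω v)
    (U : ℕ → V)
    (hU0 : ∀ v, A0 (U 0) v = F ω v)
    (hUn : ∀ n : ℕ, ∀ v, A0 (U (n + 1)) v = F ω v - A1 ω (U n) v) :
    ∀ n : ℕ, ‖u - U n‖ ≤ ρ ^ (n + 1) * ‖u‖ := by
  -- key estimate
  have key : ∀ e d : V, (∀ v, A0 e v = - A1 ω d v) → ‖e‖ ≤ ρ * ‖d‖ := by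
    intro e d h
    rcases eq_or_lt_of_le (norm_nonneg e) with h0 | h0
    · rw [← h0]
      positivity
    · have h1 : lam0 * ‖e‖ ^ 2 ≤ ρ * lam0 * ‖d‖ * ‖e‖ := by
        calc lam0 * ‖e‖ ^ 2 ≤ A0 e e := hcoer e
          _ = - A1 ω d e := h e
          _ ≤ |A1 ω d e| := neg_le_abs _
          _ ≤ ρ * lam0 * ‖d‖ * ‖e‖ := hA1bdd ω d e
      nlinarith [h1, mul_pos hlam0 h0]
  have hstep : ∀ n : ℕ, ‖u - U (n + 1)‖ ≤ ρ * ‖u - U n‖ := by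
    intro n
    refine key _ _ (fun v => ?_)
    rw [hbilin0.sub_left, (hbilin1 ω).sub_left, hUn n v]
    have hA0u : A0 u v = F ω v - A1 ω u v := by
      have := hsplit ω u v
      rw [hu v] at this
      linarith
    rw [hA0u]; ring
  have hbase : ‖u - U 0‖ ≤ ρ * ‖u‖ := by
    refine key _ _ (fun v => ?_)
    rw [hbilin0.sub_left, hU0 v]
    have := hsplit ω u v
    rw [hu v] at this
    linarith
  intro n
  induction n with
  | zero => simpa using hbase
  | succ n ih =>
    calc ‖u - U (n + 1)‖ ≤ ρ * ‖u - U n‖ := hstep n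
      _ ≤ ρ * (ρ ^ (n + 1) * ‖u‖) := by
          exact mul_le_mul_of_nonneg_left ih hρ0.le
      _ = ρ ^ (n + 1 + 1) * ‖u‖ := by ring
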